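/- Over the three-letter alphabet {p, m, z} (representing counter increment, decrement, and zero-test), the language L consisting of all words w such that (i) every prefix of w contains at least as many occurrences of p as of m, and (ii) every prefix of w whose last letter is z contains exactly as many occurrences of p as of m, is a context-free language. -/

import Mathlib

namespace CounterCF

/-- Nonterminals: `S` generates the full language, `N` the z-free words with
nonnegative prefix counters, `E` the z-free balanced (Dyck) words. -/
inductive NT : Type
  | S : NT
  | N : NT
  | E : NT
deriving DecidableEq

deriving instance DecidableEq for ContextFreeRule

abbrev tm (a : Fin 3) : Symbol (Fin 3) NT := Symbol.terminal a
abbrev nt (x : NT) : Symbol (Fin 3) NT := Symbol.nonterminal x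

def rE0 : ContextFreeRule (Fin 3) NT := ⟨NT.E, []⟩
def rE1 : ContextFreeRule (Fin 3) NT := ⟨NT.E, [tm 0, nt NT.E, tm 1, nt NT.E]⟩
def rN0 : ContextFreeRule (Fin 3) NT := ⟨NT.N, []⟩
def rN1 : ContextFreeRule (Fin 3) NT := ⟨NT.N, [tm 0, nt NT.E, tm 1, nt NT.N]⟩
def rN2 : ContextFreeRule (Fin 3) NT := ⟨NT.N, [tm 0, nt NT.N]⟩
def rS0 : ContextFreeRule (Fin 3) NT := ⟨NT.S, []⟩
def rS1 : ContextFreeRule (Fin 3) NT := ⟨NT.S, [tm 2, nt NT.S]⟩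
def rS2 : ContextFreeRule (Fin 3) NT := ⟨NT.S, [tm 0, nt NT.E, tm 1, nt NT.S]⟩
def rS3 : ContextFreeRule (Fin 3) NT := ⟨NT.S, [tm 0, nt NT.N]⟩

def g : ContextFreeGrammar (Fin 3) :=
  ⟨NT, NT.S, {rE0, rE1, rN0, rN1, rN2, rS0, rS1, rS2, rS3}⟩


def LS (w : List (Fin 3)) : Prop :=
  (∀ u : List (Fin 3), u <+: w → u.count 1 ≤ u.count 0) ∧
  (∀ u : List (Fin 3), u <+: w → u.getLast? = some 2 → u.count 0 = u.count 1)

def LN (w : List (Fin 3)) : Prop :=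
  (∀ u : List (Fin 3), u <+: w → u.count 1 ≤ u.count 0) ∧ (2 : Fin 3) ∉ w

def LE (w : List (Fin 3)) : Prop :=
  (∀ u : List (Fin 3), u <+: w → u.count 1 ≤ u.count 0) ∧
  w.count 0 = w.count 1 ∧ (2 : Fin 3) ∉ w

lemma prefix_cons_cases {α : Type*} {u : List α} {a : α} {l : List α} (h : u <+: a :: l) :
    u = [] ∨ ∃ u', u = a :: u' ∧ u' <+: l := by
  cases u with
  | nil => exact Or.inl rfl
  | cons b u' =>
    obtain ⟨d, hd⟩ := h
    injection hd with h1 h2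
    exact Or.inr ⟨u', by rw [h1], ⟨d, h2⟩⟩

lemma prefix_append_cases {α : Type*} {u A B : List α} (h : u <+: A ++ B) :
    u <+: A ∨ ∃ s, s <+: B ∧ u = A ++ s := by
  rcases Nat.le_total u.length A.length with hl | hl
  · exact Or.inl (List.prefix_of_prefix_length_le h (List.prefix_append A B) hl)
  · obtain ⟨s, rfl⟩ := List.prefix_of_prefix_length_le (List.prefix_append A B) h hl
    obtain ⟨d, hd⟩ := h
    rw [List.append_assoc] at hd
    exact Or.inr ⟨s, ⟨d, List.append_cancel_left hd⟩, rfl⟩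

lemma getLast?_cons_of_ne_nil {α : Type*} {u : List α} (b : α) (h : u ≠ []) :
    (b :: u).getLast? = u.getLast? := by
  cases u with
  | nil => simp at h
  | cons c l => simp [List.getLast?_cons_cons]

lemma mem_of_getLast?_two {u : List (Fin 3)} (h : u.getLast? = some 2) : (2 : Fin 3) ∈ u :=
  List.mem_of_mem_getLast? (by simp [h])

/-- Case analysis for prefixes of `0 :: (e ++ 1 :: x)`. -/
lemma mid_prefix_cases {u e x : List (Fin 3)} (h : u <+: 0 :: (e ++ 1 :: x)) :
    u = [] ∨ (∃ u', u = 0 :: u' ∧ u' <+: e) ∨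
      (∃ s, s <+: x ∧ u = 0 :: (e ++ 1 :: s)) := by
  rcases prefix_cons_cases h with rfl | ⟨u', rfl, hu'⟩
  · exact Or.inl rfl
  · have hu'' : u' <+: (e ++ [1]) ++ x := by simpa using hu'
    rcases prefix_append_cases hu'' with h1 | ⟨s, hs, rfl⟩
    · rcases prefix_append_cases h1 with h2 | ⟨s, hs, rfl⟩
      · exact Or.inr (Or.inl ⟨u', rfl, h2⟩)
      · rcases prefix_cons_cases hs with rfl | ⟨s', rfl, hs'⟩
        · exact Or.inr (Or.inl ⟨e ++ [], by simp, by simp⟩)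
        · rw [List.prefix_nil] at hs'
          subst hs'
          exact Or.inr (Or.inr ⟨[], List.nil_prefix, by simp⟩)
    · exact Or.inr (Or.inr ⟨s, hs, by simp⟩)

lemma count0_mid (e s : List (Fin 3)) :
    (0 :: (e ++ 1 :: s)).count 0 = 1 + e.count 0 + s.count 0 := by
  simp [List.count_cons, List.count_append]; ring

lemma count1_mid (e s : List (Fin 3)) :
    (0 :: (e ++ 1 :: s)).count 1 = e.count 1 + 1 + s.count 1 := by
  simp [List.count_cons, List.count_append]; ring

lemma mid_count_i {e x : List (Fin 3)} (he : LE e)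
    (hx : ∀ u : List (Fin 3), u <+: x → u.count 1 ≤ u.count 0) :
    ∀ u : List (Fin 3), u <+: 0 :: (e ++ 1 :: x) → u.count 1 ≤ u.count 0 := by
  intro u hu
  rcases mid_prefix_cases hu with rfl | ⟨u', rfl, hu'⟩ | ⟨s, hs, rfl⟩
  · simp
  · have := he.1 u' hu'
    simp
    omega
  · have h1 := hx s hs
    have h2 := he.2.1
    rw [count0_mid, count1_mid]
    omega

lemma LE_mid {e x : List (Fin 3)} (he : LE e) (hx : LE x) : LE (0 :: (e ++ 1 :: x)) := by
  refine ⟨mid_count_i he hx.1, ?_, ?_⟩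
  · rw [count0_mid, count1_mid, he.2.1, hx.2.1]
    ring
  · simp only [List.mem_cons, List.mem_append]
    rintro (h | h | h | h) <;> first
      | exact absurd h (by decide)
      | exact he.2.2 h
      | exact hx.2.2 h

lemma LN_mid {e x : List (Fin 3)} (he : LE e) (hx : LN x) : LN (0 :: (e ++ 1 :: x)) := by
  refine ⟨mid_count_i he hx.1, ?_⟩
  simp only [List.mem_cons, List.mem_append]
  rintro (h | h | h | h) <;> first
    | exact absurd h (by decide)
    | exact he.2.2 h
    | exact hx.2 h

lemma LS_mid {e x : List (Fin 3)} (he : LE e) (hx : LS x) : LS (0 :: (e ++ 1 :: x)) := by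
  refine ⟨mid_count_i he hx.1, ?_⟩
  intro u hu hlast
  rcases mid_prefix_cases hu with rfl | ⟨u', rfl, hu'⟩ | ⟨s, hs, rfl⟩
  · simp at hlast
  · rcases eq_or_ne u' [] with rfl | hne
    · simp at hlast
    · rw [getLast?_cons_of_ne_nil _ hne] at hlast
      exact absurd (mem_of_getLast?_two hlast) (fun h => he.2.2 (hu'.subset h))
  · rcases eq_or_ne s [] with rfl | hne
    · have : (0 :: (e ++ [(1 : Fin 3)])).getLast? = some 1 := by
        rw [getLast?_cons_of_ne_nil _ (by simp), List.getLast?_append_of_ne_nil _ (by simp)]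
        rfl
      simp only [show (e ++ (1:Fin 3) :: []) = e ++ [(1:Fin 3)] by simp, this] at hlast
      exact absurd (Option.some.inj hlast) (by decide)
    · have h2 : (0 :: (e ++ 1 :: s)).getLast? = s.getLast? := by
        rw [getLast?_cons_of_ne_nil _ (by simp),
          show e ++ 1 :: s = (e ++ [1]) ++ s by simp,
          List.getLast?_append_of_ne_nil _ hne]
      rw [h2] at hlast
      have h3 := hx.2 s hs hlast
      rw [count0_mid, count1_mid, he.2.1]
      omega

lemma LN_pN {x : List (Fin 3)} (hx : LN x) : LN (0 :: x) := by
  constructor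
  · intro u hu
    rcases prefix_cons_cases hu with rfl | ⟨u', rfl, hu'⟩
    · simp
    · have := hx.1 u' hu'
      simp
      omega
  · simp only [List.mem_cons]
    rintro (h | h)
    · exact absurd h (by decide)
    · exact hx.2 h

lemma LS_pN {x : List (Fin 3)} (hx : LN x) : LS (0 :: x) := by
  refine ⟨(LN_pN hx).1, ?_⟩
  intro u hu hlast
  rcases prefix_cons_cases hu with rfl | ⟨u', rfl, hu'⟩
  · simp at hlast
  · rcases eq_or_ne u' [] with rfl | hne
    · simp at hlast
    · rw [getLast?_cons_of_ne_nil _ hne] at hlast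
      exact absurd (mem_of_getLast?_two hlast) (fun h => hx.2 (hu'.subset h))

lemma LS_zS {x : List (Fin 3)} (hx : LS x) : LS (2 :: x) := by
  constructor
  · intro u hu
    rcases prefix_cons_cases hu with rfl | ⟨u', rfl, hu'⟩
    · simp
    · have := hx.1 u' hu'
      simp
      omega
  · intro u hu hlast
    rcases prefix_cons_cases hu with rfl | ⟨u', rfl, hu'⟩
    · simp at hlast
    · rcases eq_or_ne u' [] with rfl | hne
      · decide
      · rw [getLast?_cons_of_ne_nil _ hne] at hlast
        have := hx.2 u' hu' hlast
        simp
        omega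

lemma LE_nil : LE [] := ⟨by rintro u hu; simp [List.prefix_nil.mp hu], by simp, by simp⟩
lemma LN_nil : LN [] := ⟨by rintro u hu; simp [List.prefix_nil.mp hu], by simp⟩
lemma LS_nil : LS [] := ⟨by rintro u hu; simp [List.prefix_nil.mp hu],
  by rintro u hu; simp [List.prefix_nil.mp hu]⟩



lemma fin3_cases (a : Fin 3) : a = 0 ∨ a = 1 ∨ a = 2 := by fin_cases a <;> simp

lemma take_succ_eq {v : List (Fin 3)} {j : ℕ} (h : j < v.length) :
    v.take (j + 1) = v.take j ++ [v.get ⟨j, h⟩] := by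
  rw [List.take_succ]
  simp [List.getElem?_eq_getElem h]

lemma mem_take_last {v : List (Fin 3)} (h : (2 : Fin 3) ∈ v) :
    ∃ j : ℕ, ∃ hj : j < v.length, v.get ⟨j, hj⟩ = 2 := by
  obtain ⟨⟨j, hj⟩, hget⟩ := List.mem_iff_get.mp h
  exact ⟨j, hj, hget⟩

lemma split (v : List (Fin 3))
    (hv : ∀ u : List (Fin 3), u <+: v → u.count 1 ≤ u.count 0 + 1)
    (hz : ∀ u : List (Fin 3), u <+: v → u.getLast? = some 2 → u.count 1 = u.count 0 + 1) :
    ((∀ u : List (Fin 3), u <+: v → u.count 1 ≤ u.count 0) ∧ (2 : Fin 3) ∉ v) ∨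
    (∃ e r, v = e ++ 1 :: r ∧ LE e) := by
  by_cases hk : ∃ k, k ≤ v.length ∧ (v.take k).count 1 = (v.take k).count 0 + 1
  · -- there is a first return; split there
    right
    classical
    set k := Nat.find hk with hkdef
    obtain ⟨hklen, hkeq⟩ := Nat.find_spec hk
    rw [← hkdef] at hklen hkeq
    have hk0 : k ≠ 0 := by
      intro h
      rw [h] at hkeq
      simp at hkeq
    have aux : ∀ j, j < k → (v.take j).count 1 ≤ (v.take j).count 0 := by
      intro j
      induction j with
      | zero => intro _; simp
      | succ j ih =>
        intro hj
        have hjk : j < k := Nat.lt_of_succ_lt hj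
        have hjlen' : j + 1 ≤ v.length := le_trans (le_of_lt hj) hklen
        have hjlen : j < v.length := by omega
        have ha := take_succ_eq hjlen
        have hne : ¬((v.take (j + 1)).count 1 = (v.take (j + 1)).count 0 + 1) :=
          fun hEq => Nat.find_min hk (hkdef ▸ hj) ⟨hjlen', hEq⟩
        have hih := ih hjk
        rcases fin3_cases (v.get ⟨j, hjlen⟩) with h3 | h3 | h3 <;>
          rw [ha, h3] at hne ⊢ <;> simp [List.count_append] at hne ⊢ <;> omega
    -- last letter of take k is 1
    have hj0 : k - 1 < v.length := lt_of_lt_of_le (Nat.pred_lt hk0) hklen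
    have htake : v.take k = v.take (k - 1) ++ [v.get ⟨k - 1, hj0⟩] := by
      have h1 := take_succ_eq hj0
      rw [show k - 1 + 1 = k from Nat.succ_pred_eq_of_pos (Nat.pos_of_ne_zero hk0)] at h1
      exact h1
    have haux := aux (k - 1) (Nat.pred_lt hk0)
    have hE : LE (v.take (k - 1)) := by
      refine ⟨?_, ?_, ?_⟩
      · intro u hu
        have hul : u.length ≤ k - 1 := by
          have := hu.length_le
          rw [List.length_take] at this
          omega
        have huv : u <+: v := hu.trans (List.take_prefix _ _)
        rw [List.prefix_iff_eq_take.mp huv]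
        exact aux u.length (lt_of_le_of_lt hul (Nat.pred_lt hk0))
      · -- balance: last letter must be 1
        rcases fin3_cases (v.get ⟨k - 1, hj0⟩) with h3 | h3 | h3 <;>
          rw [htake, h3] at hkeq <;> simp [List.count_append] at hkeq <;> omega
      · intro hmem
        have hlen2 : (k - 1) ≤ v.length := le_of_lt hj0
        obtain ⟨j, hj, hget⟩ := mem_take_last hmem
        have hjlt : j < k - 1 := by
          have := hj
          rw [List.length_take] at this
          omega
        have hjlen : j < v.length := lt_of_lt_of_le (lt_of_lt_of_le hjlt (Nat.sub_le _ _)) hklen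
        have hgv : v.get ⟨j, hjlen⟩ = 2 := by
          rw [← hget]
          simp [List.get_eq_getElem, List.getElem_take]
        have hu : v.take (j + 1) = v.take j ++ [(2 : Fin 3)] := by
          rw [take_succ_eq hjlen, hgv]
        have hlast : (v.take (j + 1)).getLast? = some 2 := by
          rw [hu, List.getLast?_concat]
        have := hz (v.take (j + 1)) (List.take_prefix _ _) hlast
        have := aux (j + 1) (by omega)
        omega
    -- now conclude
    have hlast1 : v.get ⟨k - 1, hj0⟩ = 1 := by
      rcases fin3_cases (v.get ⟨k - 1, hj0⟩) with h3 | h3 | h3 <;>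
        rw [htake, h3] at hkeq <;> simp [List.count_append] at hkeq <;> first | omega | rfl
    refine ⟨v.take (k - 1), v.drop k, ?_, hE⟩
    conv_lhs => rw [← List.take_append_drop k v]
    rw [htake, hlast1]
    simp
  · left
    push_neg at hk
    have aux : ∀ j, j ≤ v.length → (v.take j).count 1 ≤ (v.take j).count 0 := by
      intro j
      induction j with
      | zero => intro _; simp
      | succ j ih =>
        intro hj
        have hjlen : j < v.length := hj
        have ha := take_succ_eq hjlen
        have hne := hk (j + 1) hj
        have hih := ih (le_of_lt hjlen)
        rcases fin3_cases (v.get ⟨j, hjlen⟩) with h3 | h3 | h3 <;>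
          rw [ha, h3] at hne ⊢ <;> simp [List.count_append] at hne ⊢ <;> omega
    constructor
    · intro u hu
      have hueq : u = v.take u.length := List.prefix_iff_eq_take.mp hu
      rw [hueq]
      exact aux u.length (by simpa using hu.length_le)
    · intro hmem
      obtain ⟨j, hj, hget⟩ := mem_take_last hmem
      have hu : v.take (j + 1) = v.take j ++ [(2 : Fin 3)] := by
        rw [take_succ_eq hj, hget]
      have hlast : (v.take (j + 1)).getLast? = some 2 := by
        rw [hu, List.getLast?_concat]
      have := hz (v.take (j + 1)) (List.take_prefix _ _) hlast
      have := aux (j + 1) hj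
      omega


section
open ContextFreeGrammar

lemma rule_mem_iff {r : ContextFreeRule (Fin 3) NT} :
    r ∈ g.rules ↔ r = rE0 ∨ r = rE1 ∨ r = rN0 ∨ r = rN1 ∨ r = rN2 ∨
      r = rS0 ∨ r = rS1 ∨ r = rS2 ∨ r = rS3 := by
  change r ∈ ({rE0, rE1, rN0, rN1, rN2, rS0, rS1, rS2, rS3} : Finset (ContextFreeRule (Fin 3) NT)) ↔ _
  simp [g, Finset.mem_insert, Finset.mem_singleton]

lemma mem_rE0 : rE0 ∈ g.rules := rule_mem_iff.mpr (by tauto)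
lemma mem_rE1 : rE1 ∈ g.rules := rule_mem_iff.mpr (by tauto)
lemma mem_rN0 : rN0 ∈ g.rules := rule_mem_iff.mpr (by tauto)
lemma mem_rN1 : rN1 ∈ g.rules := rule_mem_iff.mpr (by tauto)
lemma mem_rN2 : rN2 ∈ g.rules := rule_mem_iff.mpr (by tauto)
lemma mem_rS0 : rS0 ∈ g.rules := rule_mem_iff.mpr (by tauto)
lemma mem_rS1 : rS1 ∈ g.rules := rule_mem_iff.mpr (by tauto)
lemma mem_rS2 : rS2 ∈ g.rules := rule_mem_iff.mpr (by tauto)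
lemma mem_rS3 : rS3 ∈ g.rules := rule_mem_iff.mpr (by tauto)

/-- Semantics of a single symbol. -/
def sem1 : Symbol (Fin 3) NT → List (Fin 3) → Prop
  | Symbol.terminal a, w => w = [a]
  | Symbol.nonterminal NT.E, w => LE w
  | Symbol.nonterminal NT.N, w => LN w
  | Symbol.nonterminal NT.S, w => LS w

/-- Semantics of a sentential form: concatenations of member words. -/
def Sem : List (Symbol (Fin 3) NT) → List (Fin 3) → Prop
  | [], w => w = []
  | s :: ss, w => ∃ x y, w = x ++ y ∧ sem1 s x ∧ Sem ss y

lemma Sem_append {A B : List (Symbol (Fin 3) NT)} {w : List (Fin 3)} :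
    Sem (A ++ B) w ↔ ∃ x y, w = x ++ y ∧ Sem A x ∧ Sem B y := by
  induction A generalizing w with
  | nil =>
    simp only [List.nil_append, Sem]
    constructor
    · intro h; exact ⟨[], w, by simp, rfl, h⟩
    · rintro ⟨x, y, rfl, rfl, h⟩; simpa using h
  | cons s ss ih =>
    constructor
    · rintro ⟨x, y, rfl, hx, hy⟩
      rw [List.append_eq, ih] at hy
      obtain ⟨z, t, rfl, hz, ht⟩ := hy
      exact ⟨x ++ z, t, by simp, ⟨x, z, rfl, hx, hz⟩, ht⟩
    · rintro ⟨q, t, rfl, ⟨x, z, rfl, hx, hz⟩, ht⟩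
      exact ⟨x, z ++ t, by simp, hx, ih.mpr ⟨z, t, rfl, hz, ht⟩⟩

lemma Sem_map_terminal (w : List (Fin 3)) : Sem (w.map Symbol.terminal) w := by
  induction w with
  | nil => rfl
  | cons a v ih => exact ⟨[a], v, rfl, rfl, ih⟩

lemma sound_step {r : ContextFreeRule (Fin 3) NT} (hr : r ∈ g.rules) {w : List (Fin 3)}
    (h : Sem r.output w) : sem1 (Symbol.nonterminal r.input) w := by
  rcases rule_mem_iff.mp hr with rfl | rfl | rfl | rfl | rfl | rfl | rfl | rfl | rfl
  · obtain rfl := h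
    exact LE_nil
  · obtain ⟨_, _, rfl, rfl, e, _, rfl, he, _, _, rfl, rfl, x, _, rfl, hx, rfl⟩ := h
    simpa [sem1, rE1] using LE_mid he hx
  · obtain rfl := h
    exact LN_nil
  · obtain ⟨_, _, rfl, rfl, e, _, rfl, he, _, _, rfl, rfl, x, _, rfl, hx, rfl⟩ := h
    simpa [sem1, rN1] using LN_mid he hx
  · obtain ⟨_, _, rfl, rfl, x, _, rfl, hx, rfl⟩ := h
    simpa [sem1, rN2] using LN_pN hx
  · obtain rfl := h
    exact LS_nil
  · obtain ⟨_, _, rfl, rfl, x, _, rfl, hx, rfl⟩ := h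
    simpa [sem1, rS1] using LS_zS hx
  · obtain ⟨_, _, rfl, rfl, e, _, rfl, he, _, _, rfl, rfl, x, _, rfl, hx, rfl⟩ := h
    simpa [sem1, rS2] using LS_mid he hx
  · obtain ⟨_, _, rfl, rfl, x, _, rfl, hx, rfl⟩ := h
    simpa [sem1, rS3] using LS_pN hx

lemma derives_sound {vf : List (Symbol (Fin 3) NT)} {w : List (Fin 3)}
    (h : g.Derives vf (w.map Symbol.terminal)) : Sem vf w := by
  induction h using Relation.ReflTransGen.head_induction_on with
  | refl => exact Sem_map_terminal w
  | head hstep _ ih =>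
    rename_i u v _
    obtain ⟨r, hrmem, hrw⟩ := hstep
    obtain ⟨p, q, rfl, rfl⟩ := hrw.exists_parts
    replace ih := Sem_append.mp ih
    obtain ⟨xy, z, rfl, hxy, hz⟩ := ih
    replace hxy := Sem_append.mp hxy
    obtain ⟨x, y, rfl, hp, hout⟩ := hxy
    refine Sem_append.mpr ?_
    refine ⟨x ++ y, z, rfl, ?_, hz⟩
    refine Sem_append.mpr ?_
    exact ⟨x, y, rfl, hp, y, [], by simp, sound_step hrmem hout, rfl⟩

lemma derives_rule {r : ContextFreeRule (Fin 3) NT} (hr : r ∈ g.rules) :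
    g.Derives [Symbol.nonterminal r.input] r.output :=
  ContextFreeGrammar.Produces.single ⟨r, hr, ContextFreeRule.Rewrites.input_output⟩

lemma der_mid {X Y : NT}
    (hr : (⟨X, [tm 0, nt NT.E, tm 1, nt Y]⟩ : ContextFreeRule (Fin 3) NT) ∈ g.rules)
    {e x : List (Fin 3)}
    (dE : g.Derives [nt NT.E] (e.map Symbol.terminal))
    (dX : g.Derives [nt Y] (x.map Symbol.terminal)) :
    g.Derives [nt X] ((0 :: (e ++ 1 :: x)).map Symbol.terminal) := by
  refine (derives_rule hr).trans ?_
  have d1 : g.Derives ([tm 0] ++ [nt NT.E] ++ [tm 1, nt Y])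
      ([tm 0] ++ e.map Symbol.terminal ++ [tm 1, nt Y]) :=
    (dE.append_left [tm 0]).append_right [tm 1, nt Y]
  have d2 : g.Derives (([tm 0] ++ e.map Symbol.terminal ++ [tm 1]) ++ [nt Y])
      (([tm 0] ++ e.map Symbol.terminal ++ [tm 1]) ++ x.map Symbol.terminal) :=
    dX.append_left _
  refine ContextFreeGrammar.Derives.trans (by simpa using d1) ?_
  have := (by erw [List.append_assoc] at d2; exact d2 :
    g.Derives ([tm 0] ++ e.map Symbol.terminal ++ [tm 1, nt Y])
      ([tm 0] ++ e.map Symbol.terminal ++ [tm 1] ++ x.map Symbol.terminal))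
  refine this.trans ?_
  erw [show (0 :: (e ++ 1 :: x)).map (Symbol.terminal (N := NT)) =
      [tm 0] ++ e.map Symbol.terminal ++ [tm 1] ++ x.map Symbol.terminal by simp]
  exact Relation.ReflTransGen.refl

lemma der_cons {X Y : NT} (a : Fin 3)
    (hr : (⟨X, [tm a, nt Y]⟩ : ContextFreeRule (Fin 3) NT) ∈ g.rules)
    {x : List (Fin 3)} (dX : g.Derives [nt Y] (x.map Symbol.terminal)) :
    g.Derives [nt X] ((a :: x).map Symbol.terminal) := by
  refine (derives_rule hr).trans ?_
  have := dX.append_left [tm a]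
  exact this

end

lemma tail_prefix {e r u : List (Fin 3)} (hu : u <+: r) :
    (0 :: (e ++ 1 :: u)) <+: (0 :: (e ++ 1 :: r)) := by
  obtain ⟨d, rfl⟩ := hu
  exact ⟨d, by simp⟩

lemma mid_getLast {e u : List (Fin 3)} (hne : u ≠ []) :
    (0 :: (e ++ 1 :: u)).getLast? = u.getLast? := by
  rw [getLast?_cons_of_ne_nil _ (by simp),
    show e ++ 1 :: u = (e ++ [1]) ++ u by simp,
    List.getLast?_append_of_ne_nil _ hne]

lemma tail_count_i {e r : List (Fin 3)} (he : LE e)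
    (h : ∀ u : List (Fin 3), u <+: 0 :: (e ++ 1 :: r) → u.count 1 ≤ u.count 0) :
    ∀ u : List (Fin 3), u <+: r → u.count 1 ≤ u.count 0 := by
  intro u hu
  have := h _ (tail_prefix hu)
  rw [count0_mid, count1_mid] at this
  have hb := he.2.1
  omega

lemma LS_tail {e r : List (Fin 3)} (he : LE e) (h : LS (0 :: (e ++ 1 :: r))) : LS r := by
  refine ⟨tail_count_i he h.1, ?_⟩
  intro u hu hl
  have hne : u ≠ [] := by rintro rfl; simp at hl
  have := h.2 _ (tail_prefix hu) (by rw [mid_getLast hne]; exact hl)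
  rw [count0_mid, count1_mid] at this
  have hb := he.2.1
  omega

lemma LN_tail {e r : List (Fin 3)} (he : LE e) (h : LN (0 :: (e ++ 1 :: r))) : LN r := by
  refine ⟨tail_count_i he h.1, fun hm => h.2 ?_⟩
  simp [hm]

lemma LE_tail {e r : List (Fin 3)} (he : LE e) (h : LE (0 :: (e ++ 1 :: r))) : LE r := by
  refine ⟨tail_count_i he h.1, ?_, fun hm => h.2.2 ?_⟩
  · have := h.2.1
    rw [count0_mid, count1_mid] at this
    have hb := he.2.1
    omega
  · simp [hm]

lemma split0 {v : List (Fin 3)}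
    (h1 : ∀ u : List (Fin 3), u <+: 0 :: v → u.count 1 ≤ u.count 0)
    (h2 : ∀ u : List (Fin 3), u <+: 0 :: v → u.getLast? = some 2 → u.count 0 = u.count 1) :
    ((∀ u : List (Fin 3), u <+: v → u.count 1 ≤ u.count 0) ∧ (2 : Fin 3) ∉ v) ∨
    (∃ e r, v = e ++ 1 :: r ∧ LE e) := by
  apply split
  · intro u hu
    have := h1 (0 :: u) (by obtain ⟨d, rfl⟩ := hu; exact ⟨d, rfl⟩)
    simp at this
    omega
  · intro u hu hl
    have hne : u ≠ [] := by rintro rfl; simp at hl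
    have := h2 (0 :: u) (by obtain ⟨d, rfl⟩ := hu; exact ⟨d, rfl⟩)
      (by rw [getLast?_cons_of_ne_nil _ hne]; exact hl)
    simp at this
    omega

lemma LS_tail_z {v : List (Fin 3)} (h : LS (2 :: v)) : LS v := by
  constructor
  · intro u hu
    have := h.1 (2 :: u) (by obtain ⟨d, rfl⟩ := hu; exact ⟨d, rfl⟩)
    simpa using this
  · intro u hu hl
    have hne : u ≠ [] := by rintro rfl; simp at hl
    have := h.2 (2 :: u) (by obtain ⟨d, rfl⟩ := hu; exact ⟨d, rfl⟩)
      (by rw [getLast?_cons_of_ne_nil _ hne]; exact hl)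
    simpa using this

lemma complete : ∀ n : ℕ, ∀ w : List (Fin 3), w.length ≤ n →
    (LE w → g.Derives [nt NT.E] (w.map Symbol.terminal)) ∧
    (LN w → g.Derives [nt NT.N] (w.map Symbol.terminal)) ∧
    (LS w → g.Derives [nt NT.S] (w.map Symbol.terminal)) := by
  intro n
  induction n with
  | zero =>
    intro w hw
    rw [List.length_eq_zero_iff.mp (Nat.le_zero.mp hw)]
    exact ⟨fun _ => derives_rule mem_rE0, fun _ => derives_rule mem_rN0,
      fun _ => derives_rule mem_rS0⟩
  | succ n ih =>
    intro w hw
    match w with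
    | [] =>
      exact ⟨fun _ => derives_rule mem_rE0, fun _ => derives_rule mem_rN0,
        fun _ => derives_rule mem_rS0⟩
    | a :: v =>
      have hvlen : v.length ≤ n := by simpa using hw
      rcases fin3_cases a with rfl | rfl | rfl
      · -- a = 0
        have key : ∀ (h1 : ∀ u : List (Fin 3), u <+: 0 :: v → u.count 1 ≤ u.count 0)
            (_ : ∀ u : List (Fin 3), u <+: 0 :: v → u.getLast? = some 2 →
              u.count 0 = u.count 1), True := fun _ _ => trivial
        refine ⟨?_, ?_, ?_⟩
        · intro h
          have h2 : ∀ u : List (Fin 3), u <+: 0 :: v → u.getLast? = some 2 →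
              u.count 0 = u.count 1 := by
            intro u hu hl
            exact absurd (hu.subset (mem_of_getLast?_two hl)) h.2.2
          rcases split0 h.1 h2 with ⟨hnn, _⟩ | ⟨e, r, rfl, he⟩
          · exfalso
            have hb := h.2.1
            have := hnn v (List.prefix_refl v)
            simp at hb
            omega
          · have hlen : e.length ≤ n ∧ r.length ≤ n := by
              simp at hvlen ⊢
              omega
            exact der_mid mem_rE1 ((ih e hlen.1).1 he) ((ih r hlen.2).1 (LE_tail he h))
        · intro h
          have h2 : ∀ u : List (Fin 3), u <+: 0 :: v → u.getLast? = some 2 →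
              u.count 0 = u.count 1 := by
            intro u hu hl
            exact absurd (hu.subset (mem_of_getLast?_two hl)) h.2
          rcases split0 h.1 h2 with ⟨hnn, hz⟩ | ⟨e, r, rfl, he⟩
          · exact der_cons 0 mem_rN2 ((ih v hvlen).2.1 ⟨hnn, hz⟩)
          · have hlen : e.length ≤ n ∧ r.length ≤ n := by
              simp at hvlen ⊢
              omega
            exact der_mid mem_rN1 ((ih e hlen.1).1 he) ((ih r hlen.2).2.1 (LN_tail he h))
        · intro h
          rcases split0 h.1 h.2 with ⟨hnn, hz⟩ | ⟨e, r, rfl, he⟩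
          · exact der_cons 0 mem_rS3 ((ih v hvlen).2.1 ⟨hnn, hz⟩)
          · have hlen : e.length ≤ n ∧ r.length ≤ n := by
              simp at hvlen ⊢
              omega
            exact der_mid mem_rS2 ((ih e hlen.1).1 he) ((ih r hlen.2).2.2 (LS_tail he h))
      · -- a = 1 : impossible
        have himp : ¬ ∀ u : List (Fin 3), u <+: 1 :: v → u.count 1 ≤ u.count 0 := by
          intro h
          have := h [1] ⟨v, rfl⟩
          simp at this
        exact ⟨fun h => absurd h.1 himp, fun h => absurd h.1 himp, fun h => absurd h.1 himp⟩
      · -- a = 2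
        refine ⟨fun h => absurd (by simp : (2 : Fin 3) ∈ 2 :: v) h.2.2,
          fun h => absurd (by simp : (2 : Fin 3) ∈ 2 :: v) h.2, ?_⟩
        intro h
        exact der_cons 2 mem_rS1 ((ih v hvlen).2.2 (LS_tail_z h))

end CounterCF

/-- Over the alphabet `Fin 3` (where `0 = p` is increment, `1 = m` is
decrement and `2 = z` is zero-test), the language of all words such that
(i) every prefix has at least as many `p`'s as `m`'s, and (ii) every prefix
ending in `z` has exactly as many `p`'s as `m`'s, is context-free. -/
theorem counter_language_isContextFree :
    Language.IsContextFree
      {w : List (Fin 3) |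
        (∀ u : List (Fin 3), u <+: w → u.count 1 ≤ u.count 0) ∧
        (∀ u : List (Fin 3), u <+: w → u.getLast? = some 2 →
          u.count 0 = u.count 1)} := by
  refine ⟨CounterCF.g, ?_⟩
  ext w
  constructor
  · intro hw
    have hsem := CounterCF.derives_sound (w := w)
      (vf := [CounterCF.nt CounterCF.NT.S]) hw
    obtain ⟨x, y, rfl, hx, rfl⟩ := hsem
    exact (by simpa [CounterCF.sem1, CounterCF.LS] using hx : CounterCF.LS (x ++ []))
  · intro hw
    have : CounterCF.LS w := hw
    exact (CounterCF.complete w.length w le_rfl).2.2 this
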